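/- Let X be a locally compact Hausdorff space, let S be a norm-closed unital *-subalgebra of C_b(X) which separates the points of X, let K ⊆ X be compact, and let f ∈ C_b(X). Then there exists g ∈ S with g(x) = f(x) for all x ∈ K and ‖g‖_∞ ≤ 2‖f‖_∞. -/

import Mathlib

open scoped BoundedContinuousFunction

theorem aux_approx {X : Type*} [TopologicalSpace X]
    (S : StarSubalgebra ℂ (X →ᵇ ℂ))
    (hsep : ∀ x y : X, x ≠ y → ∃ s ∈ S, s x ≠ s y)
    (K : Set X) (hK : IsCompact K) (h : X →ᵇ ℂ) {ε : ℝ} (hε : 0 < ε) :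
    ∃ s ∈ S, ∀ x ∈ K, ‖s x - h x‖ < ε := by
  haveI : CompactSpace K := isCompact_iff_compactSpace.mp hK
  let R : (X →ᵇ ℂ) →⋆ₐ[ℂ] C(K, ℂ) :=
  { toFun := fun g => (g : C(X, ℂ)).restrict K
    map_one' := rfl
    map_mul' := fun _ _ => rfl
    map_zero' := rfl
    map_add' := fun _ _ => rfl
    commutes' := fun _ => rfl
    map_star' := fun _ => rfl }
  let A : StarSubalgebra ℂ C(K, ℂ) := S.map R
  have hA : A.SeparatesPoints := by
    intro x y hxy
    obtain ⟨s, hs, hsxy⟩ := hsep x y (fun hc => hxy (Subtype.ext hc))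
    exact ⟨_, ⟨R s, ⟨s, hs, rfl⟩, rfl⟩, hsxy⟩
  have htop := ContinuousMap.starSubalgebra_topologicalClosure_eq_top_of_separatesPoints A hA
  have hmem : (h : C(X, ℂ)).restrict K ∈ A.topologicalClosure := htop ▸ trivial
  rw [← SetLike.mem_coe, StarSubalgebra.topologicalClosure_coe] at hmem
  obtain ⟨s', hs'A, hs'close⟩ := Metric.mem_closure_iff.mp hmem ε hε
  obtain ⟨s, hsS, rfl⟩ := hs'A
  refine ⟨s, hsS, fun x hx => ?_⟩
  calc ‖s x - h x‖ = dist ((R s) ⟨x, hx⟩) (((h : C(X, ℂ)).restrict K) ⟨x, hx⟩) := by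
        simp [R, dist_eq_norm]; rfl
    _ ≤ dist ((h : C(X,ℂ)).restrict K) (R s) := by
        rw [dist_comm]; exact ContinuousMap.dist_apply_le_dist _
    _ < ε := hs'close


theorem aux_trunc {X : Type*} [TopologicalSpace X]
    (S : StarSubalgebra ℂ (X →ᵇ ℂ)) (hclosed : IsClosed (S : Set (X →ᵇ ℂ)))
    (K : Set X) {g : X →ᵇ ℂ} (hg : g ∈ S)
    {M ε : ℝ} (hM : 0 < M) (hgK : ∀ x ∈ K, ‖g x‖ ≤ (3/4) * M) (hε : 0 < ε) :
    ∃ t ∈ S, (∀ x, ‖t x‖ ≤ M) ∧ ∀ x ∈ K, ‖t x - g x‖ ≤ ε := by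
  -- choose n
  obtain ⟨n₀, hn₀⟩ := exists_pow_lt_of_lt_one (div_pos hε hM) (by norm_num : (3/4 : ℝ) < 1)
  set n := n₀ + 1 with hn
  have hne : M * (3/4 : ℝ) ^ n ≤ ε := by
    have h1 : (3/4 : ℝ) ^ n ≤ (3/4 : ℝ) ^ n₀ :=
      pow_le_pow_of_le_one (by norm_num) (by norm_num) (Nat.le_succ n₀)
    have := h1.trans hn₀.le
    calc M * (3/4:ℝ)^n ≤ M * (ε / M) := by nlinarith
      _ = ε := by field_simp
  -- the denominator function
  set D : X → ℝ := fun x => M ^ (2*n) + ‖g x‖ ^ (2*n) with hD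
  have hDpos : ∀ x, 0 < D x := fun x => by positivity
  have hDM : ∀ x, M ^ (2*n) ≤ D x := fun x => le_add_of_nonneg_right (by positivity)
  have hMpow : (0:ℝ) < M ^ (2*n) := by positivity
  -- a = M^(2n) + (g* g)^n, pointwise (D x : ℂ)
  set a : X →ᵇ ℂ := algebraMap ℂ (X →ᵇ ℂ) ((M:ℂ)^(2*n)) + (star g * g)^n with ha
  have haS : a ∈ S :=
    add_mem (S.algebraMap_mem _) (pow_mem (mul_mem (star_mem hg) hg) n)
  have haval : ∀ x, a x = ((D x : ℝ) : ℂ) := by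
    intro x
    have h1 : (star g * g) x = ((‖g x‖^2 : ℝ) : ℂ) := by
      simp [BoundedContinuousFunction.coe_mul, BoundedContinuousFunction.star_apply,
        RCLike.conj_mul]
    have : a x = (M:ℂ)^(2*n) + ((star g * g) x)^n := by
      simp [ha, BoundedContinuousFunction.coe_pow, BoundedContinuousFunction.algebraMap_apply,
        smul_eq_mul]
    rw [this, h1, hD]
    push_cast
    ring
  -- the inverse b
  have hcont : Continuous fun x => (((D x)⁻¹ : ℝ) : ℂ) := by
    apply Complex.continuous_ofReal.comp
    apply Continuous.inv₀
    · exact continuous_const.add ((continuous_norm.comp g.continuous).pow _)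
    · exact fun x => (hDpos x).ne'
  set b : X →ᵇ ℂ := BoundedContinuousFunction.ofNormedAddCommGroup
      (fun x => (((D x)⁻¹ : ℝ) : ℂ)) hcont ((M ^ (2*n))⁻¹) (fun x => by
        rw [Complex.norm_real, Real.norm_eq_abs, abs_of_pos (inv_pos.mpr (hDpos x))]
        exact inv_anti₀ hMpow (hDM x)) with hb
  have hbval : ∀ x, b x = (((D x)⁻¹ : ℝ) : ℂ) := fun x => rfl
  have hab : a * b = 1 := by
    ext x
    rw [BoundedContinuousFunction.coe_mul]
    show a x * b x = 1
    rw [haval x, hbval x]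
    push_cast
    rw [mul_inv_cancel₀]
    exact_mod_cast (hDpos x).ne'
  -- b ∈ S by spectral permanence
  have hbS : b ∈ S := by
    haveI : IsClosed (S : Set (X →ᵇ ℂ)) := hclosed
    have hunit : IsUnit ((⟨a, haS⟩ : S) : X →ᵇ ℂ) := by
      refine ⟨⟨a, b, hab, ?_⟩, rfl⟩
      rw [mul_comm] at hab; exact hab
    have hunit' : IsUnit (⟨a, haS⟩ : S) := S.coe_isUnit.mp hunit
    obtain ⟨c, hc⟩ : ∃ c : S, (c : X →ᵇ ℂ) * a = 1 := by
      refine ⟨↑hunit'.unit⁻¹, ?_⟩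
      have h2 : ((hunit'.unit : ↥S) : X →ᵇ ℂ) = a := congrArg Subtype.val hunit'.unit_spec
      have h1 : ((↑hunit'.unit⁻¹ : ↥S) : X →ᵇ ℂ) * ((hunit'.unit : ↥S) : X →ᵇ ℂ) = 1 := by
        exact_mod_cast congrArg Subtype.val hunit'.unit.inv_mul
      rw [h2] at h1
      exact h1
    have hbc : b = (c : X →ᵇ ℂ) := by
      calc b = 1 * b := (one_mul b).symm
        _ = ((c : X →ᵇ ℂ) * a) * b := by rw [hc]
        _ = (c : X →ᵇ ℂ) := by rw [mul_assoc, hab, mul_one]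
    rw [hbc]
    exact c.2
  -- define t
  refine ⟨algebraMap ℂ (X →ᵇ ℂ) ((M:ℂ)^(2*n)) * (g * b),
    S.mul_mem (S.algebraMap_mem _) (S.mul_mem hg hbS), ?_, ?_⟩
  · intro x
    have hval : (algebraMap ℂ (X →ᵇ ℂ) ((M:ℂ)^(2*n)) * (g * b)) x
        = (M:ℂ)^(2*n) * (g x * (((D x)⁻¹ : ℝ) : ℂ)) := by
      simp [BoundedContinuousFunction.coe_mul, BoundedContinuousFunction.algebraMap_apply,
        hbval, smul_eq_mul]
    rw [hval]
    rw [norm_mul, norm_mul, Complex.norm_real, norm_pow, Complex.norm_real]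
    rw [Real.norm_eq_abs, abs_of_pos hM, Real.norm_eq_abs, abs_of_pos (inv_pos.mpr (hDpos x))]
    set r := ‖g x‖ with hr
    have hr0 : 0 ≤ r := norm_nonneg _
    have key : M ^ (2*n) * r ≤ M * D x := by
      rcases le_total r M with hrM | hMr
      · have h1 : M ^ (2*n) * r ≤ M ^ (2*n) * M :=
          mul_le_mul_of_nonneg_left hrM hMpow.le
        have h2 : (0:ℝ) ≤ r ^ (2*n) := by positivity
        have hDx : D x = M ^ (2*n) + r ^ (2*n) := rfl
        nlinarith
      · obtain ⟨k, hk⟩ : ∃ k, 2*n = k + 1 := ⟨2*n - 1, by omega⟩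
        have h1 : M ^ k ≤ r ^ k := pow_le_pow_left₀ hM.le hMr k
        have h2 : M ^ (2*n) * r ≤ M * r ^ (2*n) := by
          rw [hk, pow_succ, pow_succ]
          calc M ^ k * M * r = M * (M ^ k * r) := by ring
            _ ≤ M * (r ^ k * r) := by
                exact mul_le_mul_of_nonneg_left
                  (mul_le_mul_of_nonneg_right h1 hr0) hM.le
        have hDx : D x = M ^ (2*n) + r ^ (2*n) := rfl
        nlinarith
    calc M ^ (2*n) * (r * (D x)⁻¹) = (M ^ (2*n) * r) * (D x)⁻¹ := by ring
      _ ≤ (M * D x) * (D x)⁻¹ :=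
          mul_le_mul_of_nonneg_right key (inv_pos.mpr (hDpos x)).le
      _ = M := by field_simp; exact div_self (hDpos x).ne'
  · intro x hx
    have hval : (algebraMap ℂ (X →ᵇ ℂ) ((M:ℂ)^(2*n)) * (g * b)) x
        = (M:ℂ)^(2*n) * (g x * (((D x)⁻¹ : ℝ) : ℂ)) := by
      simp [BoundedContinuousFunction.coe_mul, BoundedContinuousFunction.algebraMap_apply,
        hbval, smul_eq_mul]
    rw [hval]
    have hfact : (M:ℂ)^(2*n) * (g x * (((D x)⁻¹ : ℝ) : ℂ)) - g x
        = ((M^(2*n) * (D x)⁻¹ - 1 : ℝ) : ℂ) * g x := by push_cast; ring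
    rw [hfact, norm_mul, Complex.norm_real, Real.norm_eq_abs]
    set r := ‖g x‖ with hr
    have hr0 : 0 ≤ r := norm_nonneg _
    have hrM : r ≤ (3/4) * M := hgK x hx
    have hDx : D x = M ^ (2*n) + r ^ (2*n) := rfl
    have hDne : D x ≠ 0 := (hDpos x).ne'
    have hc1 : M^(2*n) * (D x)⁻¹ ≤ 1 := by
      rw [← div_eq_mul_inv, div_le_one (hDpos x)]
      exact hDM x
    have habs : |M^(2*n) * (D x)⁻¹ - 1| = r^(2*n) * (D x)⁻¹ := by
      rw [abs_of_nonpos (by linarith)]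
      field_simp
      linarith [hDx]
    rw [habs]
    have hinv : (D x)⁻¹ ≤ (M^(2*n))⁻¹ := inv_anti₀ hMpow (hDM x)
    have step1 : r^(2*n) * (D x)⁻¹ * r ≤ r^(2*n) * (M^(2*n))⁻¹ * r := by gcongr
    have step2 : r^(2*n) * (M^(2*n))⁻¹ * r ≤ ((3/4)*M)^(2*n) * (M^(2*n))⁻¹ * ((3/4)*M) := by
      gcongr
    have hMne : M^(2*n) ≠ 0 := hMpow.ne'
    have step3 : ((3/4)*M)^(2*n) * (M^(2*n))⁻¹ * ((3/4)*M) = (3/4:ℝ)^(2*n+1) * M := by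
      calc ((3/4)*M)^(2*n) * (M^(2*n))⁻¹ * ((3/4)*M)
          = (3/4:ℝ)^(2*n) * (3/4) * (M^(2*n) * (M^(2*n))⁻¹) * M := by rw [mul_pow]; ring
        _ = (3/4:ℝ)^(2*n) * (3/4) * M := by rw [mul_inv_cancel₀ hMne]; ring
        _ = (3/4:ℝ)^(2*n+1) * M := by rw [pow_succ]
    have step4 : (3/4:ℝ)^(2*n+1) * M ≤ (3/4:ℝ)^n * M := by
      have h5 : (3/4:ℝ)^(2*n+1) ≤ (3/4:ℝ)^n :=
        pow_le_pow_of_le_one (by norm_num) (by norm_num) (by omega)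
      nlinarith
    calc r^(2*n) * (D x)⁻¹ * r ≤ ((3/4)*M)^(2*n) * (M^(2*n))⁻¹ * ((3/4)*M) := step1.trans step2
      _ = (3/4:ℝ)^(2*n+1) * M := step3
      _ ≤ (3/4:ℝ)^n * M := step4
      _ ≤ ε := (mul_comm _ M) ▸ hne

theorem aux_step {X : Type*} [TopologicalSpace X]
    (S : StarSubalgebra ℂ (X →ᵇ ℂ)) (hclosed : IsClosed (S : Set (X →ᵇ ℂ)))
    (hsep : ∀ x y : X, x ≠ y → ∃ s ∈ S, s x ≠ s y)
    (K : Set X) (hK : IsCompact K) (h : X →ᵇ ℂ) {D : ℝ} (hD : 0 < D)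
    (hh : ∀ x ∈ K, ‖h x‖ ≤ D) :
    ∃ t ∈ S, ‖t‖ ≤ (3/2) * D ∧ ∀ x ∈ K, ‖t x - h x‖ ≤ D / 4 := by
  obtain ⟨s, hsS, hs⟩ := aux_approx S hsep K hK h (show (0:ℝ) < D/8 by linarith)
  have hsK : ∀ x ∈ K, ‖s x‖ ≤ (3/4) * ((3/2) * D) := by
    intro x hx
    calc ‖s x‖ = ‖(s x - h x) + h x‖ := by ring_nf
      _ ≤ ‖s x - h x‖ + ‖h x‖ := norm_add_le _ _
      _ ≤ D/8 + D := add_le_add (hs x hx).le (hh x hx)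
      _ ≤ (3/4) * ((3/2) * D) := by linarith
  obtain ⟨t, htS, htb, htK⟩ := aux_trunc S hclosed K hsS
    (show (0:ℝ) < (3/2) * D by linarith) hsK (show (0:ℝ) < D/8 by linarith)
  refine ⟨t, htS, ?_, ?_⟩
  · exact BoundedContinuousFunction.norm_le (by linarith) |>.mpr htb
  · intro x hx
    calc ‖t x - h x‖ = ‖(t x - s x) + (s x - h x)‖ := by ring_nf
      _ ≤ ‖t x - s x‖ + ‖s x - h x‖ := norm_add_le _ _
      _ ≤ D/8 + D/8 := add_le_add (htK x hx) (hs x hx).le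
      _ = D / 4 := by ring

/-- If `S` is a norm-closed unital `*`-subalgebra of `C_b(X)` (for `X` locally compact
Hausdorff) which separates the points of `X`, `K ⊆ X` is compact and `f ∈ C_b(X)`, then
there is `g ∈ S` agreeing with `f` on `K` and satisfying `‖g‖ ≤ 2‖f‖`. -/
theorem stmt2 {X : Type*} [TopologicalSpace X] [LocallyCompactSpace X] [T2Space X]
    (S : StarSubalgebra ℂ (X →ᵇ ℂ)) (hclosed : IsClosed (S : Set (X →ᵇ ℂ)))
    (hsep : ∀ x y : X, x ≠ y → ∃ s ∈ S, s x ≠ s y)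
    (K : Set X) (hK : IsCompact K) (f : X →ᵇ ℂ) :
    ∃ g ∈ S, (∀ x ∈ K, g x = f x) ∧ ‖g‖ ≤ 2 * ‖f‖ := by
  rcases eq_or_ne f 0 with rfl | hf0
  · exact ⟨0, S.zero_mem, fun x _ => rfl, by simp⟩
  have hD : 0 < ‖f‖ := norm_pos_iff.mpr hf0
  -- the type of approximants at stage n
  let T : ℕ → Type _ := fun n =>
    {q : X →ᵇ ℂ // q ∈ S ∧ ∀ x ∈ K, ‖q x - f x‖ ≤ (1/4 : ℝ)^n * ‖f‖}
  let q0 : T 0 := ⟨0, S.zero_mem, by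
    intro x hx
    simpa [norm_sub_rev] using f.norm_coe_le_norm x⟩
  have hstep : ∀ n (q : T n), ∃ q' : T (n+1),
      ‖(q' : X →ᵇ ℂ) - (q : X →ᵇ ℂ)‖ ≤ (3/2) * ((1/4 : ℝ)^n * ‖f‖) := by
    intro n ⟨q, hqS, hqK⟩
    have hDn : (0:ℝ) < (1/4 : ℝ)^n * ‖f‖ := by positivity
    obtain ⟨t, htS, htb, htK⟩ := aux_step S hclosed hsep K hK (f - q) hDn
      (fun x hx => by
        simpa [BoundedContinuousFunction.coe_sub, norm_sub_rev] using hqK x hx)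
    refine ⟨⟨q + t, S.add_mem hqS htS, fun x hx => ?_⟩, by simpa using htb⟩
    have h1 : (q + t) x - f x = t x - (f - q) x := by
      simp only [BoundedContinuousFunction.coe_add, BoundedContinuousFunction.coe_sub,
        Pi.add_apply, Pi.sub_apply]
      ring
    rw [h1]
    calc ‖t x - (f - q) x‖ ≤ ((1/4 : ℝ)^n * ‖f‖) / 4 := htK x hx
      _ = (1/4 : ℝ)^(n+1) * ‖f‖ := by rw [pow_succ]; ring
  choose F hF using hstep
  let u : ∀ n, T n := fun n => Nat.rec q0 F n
  have hd : ∀ n, dist ((u n).1) ((u (n+1)).1)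
      ≤ ((3/2) * ‖f‖) * (1/4 : ℝ)^n := by
    intro n
    have : u (n+1) = F n (u n) := rfl
    rw [this, dist_comm, dist_eq_norm]
    calc ‖(F n (u n)).1 - (u n).1‖ ≤ (3/2) * ((1/4 : ℝ)^n * ‖f‖) := hF n (u n)
      _ = ((3/2) * ‖f‖) * (1/4 : ℝ)^n := by ring
  have hcauchy : CauchySeq (fun n => (u n).1) :=
    cauchySeq_of_le_geometric (1/4) ((3/2) * ‖f‖) (by norm_num) hd
  obtain ⟨g, hg⟩ := cauchySeq_tendsto_of_complete hcauchy
  refine ⟨g, ?_, ?_, ?_⟩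
  · exact hclosed.mem_of_tendsto hg (Filter.Eventually.of_forall fun n => (u n).2.1)
  · intro x hx
    have h1 : Filter.Tendsto (fun n => (u n).1 x) Filter.atTop (nhds (g x)) :=
      ((continuous_eval_const (F := X →ᵇ ℂ) x).tendsto g).comp hg
    have h2 : Filter.Tendsto (fun n => (u n).1 x) Filter.atTop (nhds (f x)) := by
      rw [tendsto_iff_norm_sub_tendsto_zero]
      apply squeeze_zero (fun n => norm_nonneg _) (fun n => (u n).2.2 x hx)
      have := (tendsto_pow_atTop_nhds_zero_of_lt_one (by norm_num : (0:ℝ) ≤ 1/4)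
        (by norm_num : (1/4:ℝ) < 1)).mul_const ‖f‖
      simpa using this
    exact tendsto_nhds_unique h1 h2
  · have := dist_le_of_le_geometric_of_tendsto₀ (1/4) ((3/2) * ‖f‖) (by norm_num) hd hg
    have h0 : (u 0).1 = 0 := rfl
    rw [h0, dist_comm, dist_zero_right] at this
    calc ‖g‖ ≤ ((3/2) * ‖f‖) / (1 - 1/4) := this
      _ = 2 * ‖f‖ := by ring
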